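/- Let 0 ≤ μ < 2 and σ₁ ∈ ℝ. There is a constant C = C(μ, σ₁) such that the following holds. Let s₀ ≥ e, T > 0, and let λ, b : [0,T] → (0,∞) be continuous functions such that, setting s(τ) := s₀ + ∫₀^τ λ(σ)^{−2} dσ, one has for all τ ∈ [0,T]: λ(τ) < exp(−exp(π/(10 b(τ)))) and b(τ) ≤ 10π / log(s(τ)). Then ∫₀^T e^{σ₁/b(τ)} λ(τ)^{−μ} dτ ≤ C · exp( −((2−μ)/4) · s₀^{1/100} ). -/

import Mathlib

open MeasureTheory

lemma pow_le_factorial_mul_exp (t : ℝ) (ht : 0 ≤ t) (n : ℕ) :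
    t ^ n ≤ (Nat.factorial n : ℝ) * Real.exp t := by
  have h1 : t ^ n / (Nat.factorial n : ℝ) ≤ Real.exp t := by
    refine le_trans ?_ (Real.sum_le_exp_of_nonneg ht (n + 1))
    refine Finset.single_le_sum (f := fun i => t ^ i / (Nat.factorial i : ℝ)) ?_ ?_
    · intro i _; positivity
    · simp
  have hfac : (0:ℝ) < (Nat.factorial n : ℝ) := by positivity
  rw [div_le_iff₀ hfac] at h1
  linarith [h1]

lemma sq_div_four_le_exp (x : ℝ) (hx : 0 ≤ x) : x ^ 2 / 4 ≤ Real.exp x := by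
  nlinarith [Real.quadratic_le_exp_of_nonneg hx]

lemma exp_neg_le_const_div_sq {c s : ℝ} (hc : 0 < c) (hspos : 0 < s) :
    Real.exp (-(c/2) * s ^ ((1:ℝ)/100)) ≤ ((Nat.factorial 200 : ℝ) * (2 / c) ^ 200) / s ^ 2 := by
  set A₂ : ℝ := (Nat.factorial 200 : ℝ) * (2 / c) ^ 200 with hA₂_def
  set y : ℝ := s ^ ((1:ℝ)/100) with hy_def
  have hy : 0 < y := Real.rpow_pos_of_pos hspos _
  have hs2 : s ^ 2 = y ^ (200:ℕ) := by
    rw [hy_def, ← Real.rpow_natCast (s ^ ((1:ℝ)/100)) 200, ← Real.rpow_mul hspos.le]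
    norm_num
  have h0 := pow_le_factorial_mul_exp ((c/2) * y) (by positivity) 200
  have hyy : y ^ (200:ℕ) = ((c/2) * y) ^ (200:ℕ) * (2/c) ^ (200:ℕ) := by
    have h1 : (c/2) * (2/c) = 1 := by field_simp
    calc y ^ (200:ℕ) = (((c/2) * (2/c)) * y) ^ (200:ℕ) := by rw [h1, one_mul]
      _ = ((c/2) * y) ^ (200:ℕ) * (2/c) ^ (200:ℕ) := by ring
  have hy200 : y ^ (200:ℕ) ≤ A₂ * Real.exp ((c/2) * y) := by
    rw [hyy, hA₂_def]
    calc ((c/2) * y) ^ (200:ℕ) * (2/c) ^ (200:ℕ)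
        ≤ ((Nat.factorial 200 : ℝ) * Real.exp ((c/2) * y)) * (2/c) ^ (200:ℕ) := by
          gcongr
      _ = (Nat.factorial 200 : ℝ) * (2/c) ^ (200:ℕ) * Real.exp ((c/2) * y) := by ring
  rw [le_div_iff₀ (by positivity : (0:ℝ) < s ^ 2), hs2, neg_mul, Real.exp_neg,
    inv_mul_le_iff₀ (Real.exp_pos _)]
  calc y ^ (200:ℕ) ≤ A₂ * Real.exp ((c/2) * y) := hy200
    _ = Real.exp ((c/2) * y) * A₂ := by ring

set_option maxHeartbeats 1600000 in
lemma key_pointwise (μ σ₁ : ℝ) (hμ0 : 0 ≤ μ) (hμ2 : μ < 2) {b lam s₀ s : ℝ}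
    (hb : 0 < b) (hlam : 0 < lam) (hs₀ : Real.exp 1 ≤ s₀) (hs₀s : s₀ ≤ s)
    (h1 : lam < Real.exp (-Real.exp (Real.pi / (10 * b))))
    (h2 : b ≤ 10 * Real.pi / Real.log s) :
    Real.exp (σ₁ / b) * lam ^ (-μ)
      ≤ (Real.exp ((10 * |σ₁| / Real.pi) ^ 2 / ((2 - μ) / 2)) *
          ((Nat.factorial 200 : ℝ) * (2 / ((2 - μ) / 2)) ^ 200) *
          Real.exp (-((2 - μ) / 4) * s₀ ^ ((1:ℝ) / 100))) *
        (lam ^ (-(2:ℝ)) / s ^ 2) := by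
  have hpi := Real.pi_pos
  set c : ℝ := (2 - μ) / 2 with hc_def
  clear_value c
  have hc : 0 < c := by rw [hc_def]; linarith
  set x : ℝ := Real.pi / (10 * b) with hx_def
  clear_value x
  have hx : 0 < x := by rw [hx_def]; positivity
  set E : ℝ := Real.exp x with hE_def
  clear_value E
  have hEpos : 0 < E := hE_def ▸ Real.exp_pos x
  set K : ℝ := 10 * |σ₁| / Real.pi with hK_def
  clear_value K
  have hK : 0 ≤ K := by rw [hK_def]; positivity
  have hspos : 0 < s := lt_of_lt_of_le (Real.exp_pos 1) (le_trans hs₀ hs₀s)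
  have hs₀pos : 0 < s₀ := lt_of_lt_of_le (Real.exp_pos 1) hs₀
  have hlogs : 1 ≤ Real.log s := by
    rw [Real.le_log_iff_exp_le hspos]; exact le_trans hs₀ hs₀s
  have hlogpos : 0 < Real.log s := by linarith
  set A₂ : ℝ := (Nat.factorial 200 : ℝ) * (2 / c) ^ 200 with hA₂_def
  clear_value A₂
  have hA₂ : 0 < A₂ := by rw [hA₂_def]; positivity
  -- A : σ₁ / b ≤ K * x
  have hA : σ₁ / b ≤ K * x := by
    have hKx : K * x = |σ₁| / b := by
      rw [hK_def, hx_def]; field_simp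
    rw [hKx]; gcongr; exact le_abs_self σ₁
  -- C : lam ^ (2 - μ) ≤ exp (-(2 - μ) * E)
  have hC : lam ^ ((2:ℝ) - μ) ≤ Real.exp (-(2 - μ) * E) := by
    have h := Real.rpow_le_rpow hlam.le h1.le (by linarith : (0:ℝ) ≤ 2 - μ)
    calc lam ^ ((2:ℝ) - μ) ≤ (Real.exp (-E)) ^ ((2:ℝ) - μ) := h
      _ = Real.exp (-(2 - μ) * E) := by rw [← Real.exp_mul]; ring_nf
  -- E ≥ s ^ (1/100)
  have hEge : s ^ ((1:ℝ)/100) ≤ E := by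
    have hblogs : b * Real.log s ≤ 10 * Real.pi := by
      have := (le_div_iff₀ hlogpos).mp h2
      linarith
    have hxge : Real.log s / 100 ≤ x := by
      rw [hx_def, div_le_div_iff₀ (by norm_num) (by positivity)]
      nlinarith
    calc s ^ ((1:ℝ)/100) = Real.exp (Real.log s * (1/100)) := by
          rw [Real.rpow_def_of_pos hspos]
      _ ≤ Real.exp x := Real.exp_le_exp.mpr (by linarith)
      _ = E := hE_def.symm
  -- D : K * x - c * E ≤ K ^ 2 / c
  have hD : K * x - c * E ≤ K ^ 2 / c := by
    have hE4 : x ^ 2 / 4 ≤ E := hE_def ▸ sq_div_four_le_exp x hx.le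
    have h4 : c * (K * x) ≤ K ^ 2 + c * (c * E) := by
      nlinarith [sq_nonneg (K - c * x / 2),
        mul_le_mul_of_nonneg_left hE4 (mul_nonneg hc.le hc.le)]
    have hKc : c * (K ^ 2 / c) = K ^ 2 := by field_simp
    nlinarith [h4, hKc, hc]
  -- G : exp (-(c/2) * s^(1/100)) ≤ A₂ / s^2
  have hG : Real.exp (-(c/2) * s ^ ((1:ℝ)/100)) ≤ A₂ / s ^ 2 := by
    rw [hA₂_def]
    exact exp_neg_le_const_div_sq hc hspos
  -- rpow monotonicity for s₀ ≤ s
  have hrpow : s₀ ^ ((1:ℝ)/100) ≤ s ^ ((1:ℝ)/100) :=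
    Real.rpow_le_rpow hs₀pos.le hs₀s (by norm_num)
  have hlam2 : (0:ℝ) ≤ lam ^ (-(2:ℝ)) := (Real.rpow_pos_of_pos hlam _).le
  -- Assemble
  have hB : lam ^ (-μ) = lam ^ ((2:ℝ) - μ) * lam ^ (-(2:ℝ)) := by
    rw [← Real.rpow_add hlam]; ring_nf
  have step1 : Real.exp (σ₁ / b) * lam ^ (-μ)
      ≤ Real.exp (K * x) * (Real.exp (-(2 - μ) * E) * lam ^ (-(2:ℝ))) := by
    rw [hB]
    gcongr
  have hexpsplit : Real.exp (K * x) * Real.exp (-(2 - μ) * E)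
      = Real.exp (K * x - c * E) * Real.exp (-c * E) := by
    rw [← Real.exp_add, ← Real.exp_add]
    congr 1
    rw [hc_def]; ring
  have step2 : Real.exp (K * x) * (Real.exp (-(2 - μ) * E) * lam ^ (-(2:ℝ)))
      = Real.exp (K * x - c * E) * (Real.exp (-c * E) * lam ^ (-(2:ℝ))) := by
    rw [← mul_assoc, hexpsplit, mul_assoc]
  have h5 : Real.exp (-c * E)
      ≤ Real.exp (-(c/2) * s₀ ^ ((1:ℝ)/100)) * Real.exp (-(c/2) * s ^ ((1:ℝ)/100)) := by
    rw [← Real.exp_add]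
    apply Real.exp_le_exp.mpr
    nlinarith [hEge, hrpow, hc]
  have step3 : Real.exp (K * x - c * E) * (Real.exp (-c * E) * lam ^ (-(2:ℝ)))
      ≤ Real.exp (K ^ 2 / c) *
        ((Real.exp (-(c/2) * s₀ ^ ((1:ℝ)/100)) * Real.exp (-(c/2) * s ^ ((1:ℝ)/100)))
          * lam ^ (-(2:ℝ))) := by
    gcongr
  have step4 : Real.exp (K ^ 2 / c) *
        ((Real.exp (-(c/2) * s₀ ^ ((1:ℝ)/100)) * Real.exp (-(c/2) * s ^ ((1:ℝ)/100)))
          * lam ^ (-(2:ℝ)))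
      ≤ Real.exp (K ^ 2 / c) *
        ((Real.exp (-(c/2) * s₀ ^ ((1:ℝ)/100)) * (A₂ / s ^ 2)) * lam ^ (-(2:ℝ))) := by
    gcongr
  have hfinal : Real.exp (K ^ 2 / c) *
        ((Real.exp (-(c/2) * s₀ ^ ((1:ℝ)/100)) * (A₂ / s ^ 2)) * lam ^ (-(2:ℝ)))
      = (Real.exp (K ^ 2 / c) * A₂ *
          Real.exp (-((2 - μ) / 4) * s₀ ^ ((1:ℝ) / 100))) * (lam ^ (-(2:ℝ)) / s ^ 2) := by
    have hc2 : -(c/2) = -((2 - μ) / 4) := by rw [hc_def]; ring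
    rw [hc2]; ring
  calc Real.exp (σ₁ / b) * lam ^ (-μ)
      ≤ Real.exp (K * x) * (Real.exp (-(2 - μ) * E) * lam ^ (-(2:ℝ))) := step1
    _ = Real.exp (K * x - c * E) * (Real.exp (-c * E) * lam ^ (-(2:ℝ))) := step2
    _ ≤ Real.exp (K ^ 2 / c) *
        ((Real.exp (-(c/2) * s₀ ^ ((1:ℝ)/100)) * Real.exp (-(c/2) * s ^ ((1:ℝ)/100)))
          * lam ^ (-(2:ℝ))) := step3
    _ ≤ Real.exp (K ^ 2 / c) *
        ((Real.exp (-(c/2) * s₀ ^ ((1:ℝ)/100)) * (A₂ / s ^ 2)) * lam ^ (-(2:ℝ))) := step4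
    _ = _ := hfinal

set_option maxHeartbeats 1600000 in
/-- Integrability of `λ^{-μ}`, `0 ≤ μ < 2`, enforced by the log-log relations
between `b` and `λ`. -/
theorem integrability_from_loglog (μ σ₁ : ℝ) (hμ0 : 0 ≤ μ) (hμ2 : μ < 2) :
    ∃ C : ℝ, 0 < C ∧ ∀ (s₀ T : ℝ) (lam b : ℝ → ℝ),
      Real.exp 1 ≤ s₀ → 0 < T →
      ContinuousOn lam (Set.Icc 0 T) → ContinuousOn b (Set.Icc 0 T) →
      (∀ τ ∈ Set.Icc (0 : ℝ) T, 0 < lam τ ∧ 0 < b τ) →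
      (∀ τ ∈ Set.Icc (0 : ℝ) T,
        lam τ < Real.exp (-Real.exp (Real.pi / (10 * b τ))) ∧
        b τ ≤ 10 * Real.pi /
          Real.log (s₀ + ∫ σ in (0:ℝ)..τ, (lam σ) ^ (-(2:ℝ)))) →
      (∫ τ in (0:ℝ)..T, Real.exp (σ₁ / b τ) * (lam τ) ^ (-μ))
        ≤ C * Real.exp (-((2 - μ) / 4) * s₀ ^ ((1:ℝ) / 100)) := by
  have hc : (0:ℝ) < (2 - μ) / 2 := by linarith
  refine ⟨Real.exp ((10 * |σ₁| / Real.pi) ^ 2 / ((2 - μ) / 2)) *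
      ((Nat.factorial 200 : ℝ) * (2 / ((2 - μ) / 2)) ^ 200), by positivity, ?_⟩
  set Cv : ℝ := Real.exp ((10 * |σ₁| / Real.pi) ^ 2 / ((2 - μ) / 2)) *
      ((Nat.factorial 200 : ℝ) * (2 / ((2 - μ) / 2)) ^ 200) with hCv_def
  have hCvpos : 0 < Cv := by rw [hCv_def]; positivity
  intro s₀ T lam b hs₀ hT hlamc hbc hpos hcond
  have hs₀pos : 0 < s₀ := lt_of_lt_of_le (Real.exp_pos 1) hs₀
  have hs₀1 : 1 ≤ s₀ := le_trans (Real.one_le_exp (by norm_num)) hs₀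
  have hlam2c : ContinuousOn (fun σ => lam σ ^ (-(2:ℝ))) (Set.Icc 0 T) := by
    apply ContinuousOn.rpow_const hlamc
    intro τ hτ; exact Or.inl (hpos τ hτ).1.ne'
  have hint : ∀ τ ∈ Set.Icc (0:ℝ) T,
      IntervalIntegrable (fun σ => lam σ ^ (-(2:ℝ))) volume 0 τ := by
    intro τ hτ
    apply ContinuousOn.intervalIntegrable
    rw [Set.uIcc_of_le hτ.1]
    exact hlam2c.mono (Set.Icc_subset_Icc_right hτ.2)
  set s : ℝ → ℝ := fun τ => s₀ + ∫ σ in (0:ℝ)..τ, lam σ ^ (-(2:ℝ)) with hs_def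
  have hs_ge : ∀ τ ∈ Set.Icc (0:ℝ) T, s₀ ≤ s τ := by
    intro τ hτ
    have h0 : 0 ≤ ∫ σ in (0:ℝ)..τ, lam σ ^ (-(2:ℝ)) := by
      apply intervalIntegral.integral_nonneg hτ.1
      intro u hu
      exact (Real.rpow_pos_of_pos (hpos u ⟨hu.1, le_trans hu.2 hτ.2⟩).1 _).le
    exact le_add_of_nonneg_right h0
  have hspos : ∀ τ ∈ Set.Icc (0:ℝ) T, 0 < s τ :=
    fun τ hτ => lt_of_lt_of_le hs₀pos (hs_ge τ hτ)
  have hsne : ∀ τ ∈ Set.Icc (0:ℝ) T, s τ ≠ 0 := fun τ hτ => (hspos τ hτ).ne'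
  have hscont : ContinuousOn s (Set.Icc 0 T) := by
    apply ContinuousOn.add continuousOn_const
    have he : Set.uIcc (0:ℝ) T = Set.Icc (0:ℝ) T := Set.uIcc_of_le hT.le
    rw [← he]
    apply intervalIntegral.continuousOn_primitive_interval
    rw [he]
    exact hlam2c.integrableOn_compact isCompact_Icc
  have hderiv : ∀ τ ∈ Set.Ioo (0:ℝ) T, HasDerivAt s (lam τ ^ (-(2:ℝ))) τ := by
    intro τ hτ
    have h1 : HasDerivAt (fun u => ∫ σ in (0:ℝ)..u, lam σ ^ (-(2:ℝ)))
        (lam τ ^ (-(2:ℝ))) τ := by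
      apply intervalIntegral.integral_hasDerivAt_right
        (hint τ (Set.Ioo_subset_Icc_self hτ))
      · exact (hlam2c.mono Set.Ioo_subset_Icc_self).stronglyMeasurableAtFilter
          isOpen_Ioo τ hτ
      · exact hlam2c.continuousAt (Icc_mem_nhds hτ.1 hτ.2)
    simpa [hs_def] using h1.const_add s₀
  have hFTC : (∫ τ in (0:ℝ)..T, lam τ ^ (-(2:ℝ)) / (s τ) ^ 2)
      = -(s T)⁻¹ - -(s 0)⁻¹ := by
    apply intervalIntegral.integral_eq_sub_of_hasDeriv_right_of_le hT.le
    · exact (hscont.inv₀ hsne).neg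
    · intro τ hτ
      have h2 := ((hderiv τ hτ).inv (hsne τ (Set.Ioo_subset_Icc_self hτ))).neg
      have h3 : HasDerivAt (fun τ => -(s τ)⁻¹) (lam τ ^ (-(2:ℝ)) / (s τ) ^ 2) τ := by
        rw [neg_div, neg_neg] at h2
        exact h2
      exact h3.hasDerivWithinAt
    · apply ContinuousOn.intervalIntegrable
      rw [Set.uIcc_of_le hT.le]
      exact hlam2c.div (hscont.pow 2) (fun τ hτ => pow_ne_zero 2 (hsne τ hτ))
  have hs0 : s 0 = s₀ := by simp [hs_def]
  have hkey : ∀ τ ∈ Set.Icc (0:ℝ) T,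
      Real.exp (σ₁ / b τ) * lam τ ^ (-μ) ≤
        (Cv * Real.exp (-((2 - μ) / 4) * s₀ ^ ((1:ℝ)/100)))
          * (lam τ ^ (-(2:ℝ)) / (s τ) ^ 2) := by
    intro τ hτ
    have h := key_pointwise μ σ₁ hμ0 hμ2 (hpos τ hτ).2 (hpos τ hτ).1 hs₀
      (hs_ge τ hτ) (hcond τ hτ).1 (hcond τ hτ).2
    calc Real.exp (σ₁ / b τ) * lam τ ^ (-μ) ≤ _ := h
      _ = (Cv * Real.exp (-((2 - μ) / 4) * s₀ ^ ((1:ℝ)/100)))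
          * (lam τ ^ (-(2:ℝ)) / (s τ) ^ 2) := by rw [hCv_def]
  have hint1 : IntervalIntegrable (fun τ => Real.exp (σ₁ / b τ) * lam τ ^ (-μ))
      volume 0 T := by
    apply ContinuousOn.intervalIntegrable
    rw [Set.uIcc_of_le hT.le]
    apply ContinuousOn.mul
    · exact Real.continuous_exp.comp_continuousOn
        (continuousOn_const.div hbc (fun τ hτ => (hpos τ hτ).2.ne'))
    · exact hlamc.rpow_const (fun τ hτ => Or.inl (hpos τ hτ).1.ne')
  have hint2 : IntervalIntegrable
      (fun τ => (Cv * Real.exp (-((2 - μ) / 4) * s₀ ^ ((1:ℝ)/100)))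
        * (lam τ ^ (-(2:ℝ)) / (s τ) ^ 2)) volume 0 T := by
    apply ContinuousOn.intervalIntegrable
    rw [Set.uIcc_of_le hT.le]
    exact continuousOn_const.mul
      (hlam2c.div (hscont.pow 2) (fun τ hτ => pow_ne_zero 2 (hsne τ hτ)))
  have hD0 : 0 ≤ Cv * Real.exp (-((2 - μ) / 4) * s₀ ^ ((1:ℝ)/100)) := by positivity
  calc (∫ τ in (0:ℝ)..T, Real.exp (σ₁ / b τ) * lam τ ^ (-μ))
      ≤ ∫ τ in (0:ℝ)..T, (Cv * Real.exp (-((2 - μ) / 4) * s₀ ^ ((1:ℝ)/100)))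
          * (lam τ ^ (-(2:ℝ)) / (s τ) ^ 2) :=
        intervalIntegral.integral_mono_on hT.le hint1 hint2 hkey
    _ = (Cv * Real.exp (-((2 - μ) / 4) * s₀ ^ ((1:ℝ)/100)))
          * ∫ τ in (0:ℝ)..T, lam τ ^ (-(2:ℝ)) / (s τ) ^ 2 :=
        intervalIntegral.integral_const_mul _ _
    _ = (Cv * Real.exp (-((2 - μ) / 4) * s₀ ^ ((1:ℝ)/100)))
          * (-(s T)⁻¹ - -(s 0)⁻¹) := by rw [hFTC]
    _ ≤ (Cv * Real.exp (-((2 - μ) / 4) * s₀ ^ ((1:ℝ)/100))) * 1 := by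
        apply mul_le_mul_of_nonneg_left ?_ hD0
        have h1 : 0 < s T := hspos T ⟨hT.le, le_refl T⟩
        have h2 : (s 0)⁻¹ ≤ 1 := by
          rw [hs0]
          exact inv_le_one_of_one_le₀ hs₀1
        have h3 : 0 ≤ (s T)⁻¹ := inv_nonneg.mpr h1.le
        linarith
    _ = Cv * Real.exp (-((2 - μ) / 4) * s₀ ^ ((1:ℝ)/100)) := mul_one _
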